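/- Let φₙ : [0,T] → ℝ be integrable functions with relaxation seminorms ‖φₙ‖_rx → 0 as n → ∞. Let {r_β : β ∈ B} be a family of absolutely continuous functions on [0,T] such that there exists C with ‖r_β(0)‖² + ∫₀ᵀ (ṙ_β(τ))² dτ ≤ C² for all β ∈ B. Then ‖r_β · φₙ‖_rx → 0 as n → ∞, uniformly in β ∈ B. More precisely, for every τ ∈ [0,T], |∫₀^τ r_β(t) φₙ(t) dt| ≤ C(1 + 2√τ) ‖φₙ‖_rx. -/

import Mathlib

open MeasureTheory Real Filter

lemma ibp_aux {a : ℝ} (ha : 0 ≤ a) {f u : ℝ → ℝ}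
    (hf : IntervalIntegrable f volume 0 a) (hu : IntervalIntegrable u volume 0 a) :
    ∫ t in (0:ℝ)..a, (∫ s in (0:ℝ)..t, f s) * u t
      = ∫ s in (0:ℝ)..a, f s * ((∫ x in (0:ℝ)..a, u x) - ∫ x in (0:ℝ)..s, u x) := by
  set μ : Measure ℝ := volume.restrict (Set.Ioc 0 a) with hμ
  set F : ℝ → ℝ → ℝ := fun s t => if s ≤ t then f s * u t else 0 with hF
  have hfI : IntegrableOn f (Set.Ioc 0 a) volume :=
    (intervalIntegrable_iff_integrableOn_Ioc_of_le ha).mp hf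
  have huI : IntegrableOn u (Set.Ioc 0 a) volume :=
    (intervalIntegrable_iff_integrableOn_Ioc_of_le ha).mp hu
  have hFunc : Function.uncurry F =
      Set.indicator {z : ℝ × ℝ | z.1 ≤ z.2} (fun z => f z.1 * u z.2) := by
    ext z
    by_cases h : z.1 ≤ z.2 <;> simp [Function.uncurry, hF, h, Set.indicator_apply]
  have hFint : Integrable (Function.uncurry F) (μ.prod μ) := by
    rw [hFunc]
    exact (hfI.mul_prod huI).indicator (measurableSet_le measurable_fst measurable_snd)
  have hswap : ∫ s, ∫ t, F s t ∂μ ∂μ = ∫ t, ∫ s, F s t ∂μ ∂μ :=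
    MeasureTheory.integral_integral_swap hFint
  -- RHS of swap equals LHS of the goal
  have h1 : ∫ t, ∫ s, F s t ∂μ ∂μ = ∫ t in (0:ℝ)..a, (∫ s in (0:ℝ)..t, f s) * u t := by
    rw [intervalIntegral.integral_of_le ha, hμ]
    refine setIntegral_congr_fun measurableSet_Ioc (fun t ht => ?_)
    have : ∀ s, F s t = (Set.Iic t).indicator (fun s => f s * u t) s := by
      intro s; by_cases h : s ≤ t <;> simp [hF, h, Set.indicator_apply]
    calc ∫ s, F s t ∂μ = ∫ s in Set.Ioc 0 a, (Set.Iic t).indicator (fun s => f s * u t) s := by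
          simp only [hμ]; exact integral_congr_ae (Eventually.of_forall fun s => this s)
      _ = ∫ s in Set.Ioc 0 a ∩ Set.Iic t, f s * u t := setIntegral_indicator measurableSet_Iic
      _ = ∫ s in Set.Ioc 0 t, f s * u t := by rw [Set.Ioc_inter_Iic, min_eq_right ht.2]
      _ = (∫ s in (0:ℝ)..t, f s) * u t := by
          rw [intervalIntegral.integral_of_le ht.1.le, integral_mul_const]
  -- LHS of swap equals RHS of the goal
  have h2 : ∫ s, ∫ t, F s t ∂μ ∂μ
      = ∫ s in (0:ℝ)..a, f s * ((∫ x in (0:ℝ)..a, u x) - ∫ x in (0:ℝ)..s, u x) := by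
    rw [intervalIntegral.integral_of_le ha, hμ]
    refine setIntegral_congr_fun measurableSet_Ioc (fun s hs => ?_)
    have hind : ∀ t, F s t = (Set.Ici s).indicator (fun t => f s * u t) t := by
      intro t; by_cases h : s ≤ t <;> simp [hF, h, Set.indicator_apply]
    have hset : Set.Ioc 0 a ∩ Set.Ici s = Set.Icc s a := by
      ext x
      simp only [Set.mem_inter_iff, Set.mem_Ioc, Set.mem_Ici, Set.mem_Icc]
      constructor
      · rintro ⟨⟨_, hxa⟩, hsx⟩; exact ⟨hsx, hxa⟩
      · rintro ⟨hsx, hxa⟩; exact ⟨⟨lt_of_lt_of_le hs.1 hsx, hxa⟩, hsx⟩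
    calc ∫ t, F s t ∂μ = ∫ t in Set.Ioc 0 a, (Set.Ici s).indicator (fun t => f s * u t) t := by
          simp only [hμ]; exact integral_congr_ae (Eventually.of_forall fun t => hind t)
      _ = ∫ t in Set.Ioc 0 a ∩ Set.Ici s, f s * u t := setIntegral_indicator measurableSet_Ici
      _ = ∫ t in Set.Ioc s a, f s * u t := by rw [hset, integral_Icc_eq_integral_Ioc]
      _ = f s * ∫ t in Set.Ioc s a, u t := integral_const_mul _ _
      _ = f s * ((∫ x in (0:ℝ)..a, u x) - ∫ x in (0:ℝ)..s, u x) := by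
          have hus : IntervalIntegrable u volume 0 s :=
            hu.mono_set (Set.uIcc_subset_uIcc Set.left_mem_uIcc
              (by rw [Set.uIcc_of_le ha]; exact ⟨hs.1.le, hs.2⟩))
          rw [← intervalIntegral.integral_of_le hs.2,
            ← intervalIntegral.integral_interval_sub_left hu hus]
  rw [← h1, ← hswap, h2]

/-- Cauchy–Schwarz via AM–GM: `∫ |f| ≤ √(a · ∫ f²)`. -/
lemma cs_aux {a : ℝ} (ha : 0 ≤ a) {f : ℝ → ℝ}
    (hf : IntervalIntegrable f volume 0 a)
    (hf2 : IntervalIntegrable (fun s => f s ^ 2) volume 0 a) :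
    ∫ s in (0:ℝ)..a, |f s| ≤ Real.sqrt (a * ∫ s in (0:ℝ)..a, f s ^ 2) := by
  set J := ∫ s in (0:ℝ)..a, |f s| with hJ
  set I := ∫ s in (0:ℝ)..a, f s ^ 2 with hI
  have hJ0 : 0 ≤ J := intervalIntegral.integral_nonneg ha (fun x _ => abs_nonneg _)
  have hI0 : 0 ≤ I := intervalIntegral.integral_nonneg ha (fun x _ => sq_nonneg _)
  have key : ∀ l : ℝ, 0 < l → 2 * l * J ≤ l ^ 2 * a + I := by
    intro l hl
    have h1 : 2 * l * J = ∫ s in (0:ℝ)..a, 2 * l * |f s| := by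
      rw [hJ, intervalIntegral.integral_const_mul]
    have h2 : ∫ s in (0:ℝ)..a, (l ^ 2 + f s ^ 2) = l ^ 2 * a + I := by
      rw [intervalIntegral.integral_add intervalIntegrable_const hf2,
        intervalIntegral.integral_const]
      simp [hI]; ring
    rw [h1, ← h2]
    refine intervalIntegral.integral_mono_on ha ((hf.abs).const_mul _)
      (intervalIntegrable_const.add hf2) (fun x _ => ?_)
    nlinarith [sq_nonneg (l - |f x|), sq_abs (f x)]
  rcases eq_or_lt_of_le hJ0 with h | hJpos
  · rw [← h]; exact Real.sqrt_nonneg _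
  rcases eq_or_lt_of_le ha with h | hapos
  · exfalso; rw [hJ, ← h, intervalIntegral.integral_same] at hJpos; exact lt_irrefl _ hJpos
  have hk := key (J / a) (div_pos hJpos hapos)
  have hJ2 : J ^ 2 ≤ a * I := by
    have h1 : (J / a) ^ 2 * a = J ^ 2 / a := by field_simp
    rw [h1] at hk
    have h2 : 2 * (J / a) * J = 2 * (J ^ 2 / a) := by field_simp
    rw [h2] at hk
    have := (div_le_iff₀ hapos).mp (by linarith : J ^ 2 / a ≤ I)
    linarith
  exact (Real.le_sqrt hJ0 (by positivity)).mpr hJ2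

/-- Relaxation seminorm of an integrable function on `[0,T]`. -/
noncomputable def relaxNorm (T : ℝ) (u : ℝ → ℝ) : ℝ :=
  sSup ((fun t => |∫ τ in (0:ℝ)..t, u τ|) '' Set.Icc 0 T)

lemma relaxNorm_nonneg (T : ℝ) (u : ℝ → ℝ) : 0 ≤ relaxNorm T u :=
  sSup_nonneg (by rintro x ⟨t, _, rfl⟩; exact abs_nonneg _)

lemma relaxNorm_le {T M : ℝ} {u : ℝ → ℝ} (hM : 0 ≤ M)
    (h : ∀ t ∈ Set.Icc (0:ℝ) T, |∫ τ in (0:ℝ)..t, u τ| ≤ M) :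
    relaxNorm T u ≤ M :=
  Real.sSup_le (by rintro x ⟨t, ht, rfl⟩; exact h t ht) hM

lemma abs_primitive_le {T : ℝ} (hT : 0 ≤ T) {u : ℝ → ℝ}
    (hu : IntervalIntegrable u volume 0 T) {t : ℝ} (ht : t ∈ Set.Icc (0:ℝ) T) :
    |∫ τ in (0:ℝ)..t, u τ| ≤ relaxNorm T u := by
  have hcont : ContinuousOn (fun x => ∫ τ in (0:ℝ)..x, u τ) (Set.Icc 0 T) := by
    have := intervalIntegral.continuousOn_primitive_interval
      (f := u) (μ := volume) (a := 0) (b := T) ?_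
    · rwa [Set.uIcc_of_le hT] at this
    · rw [Set.uIcc_of_le hT]
      exact (integrableOn_Icc_iff_integrableOn_Ioc).mpr
        ((intervalIntegrable_iff_integrableOn_Ioc_of_le hT).mp hu)
  have hbdd : BddAbove ((fun t => |∫ τ in (0:ℝ)..t, u τ|) '' Set.Icc 0 T) :=
    (isCompact_Icc.image_of_continuousOn
      (continuous_abs.comp_continuousOn hcont)).bddAbove
  exact le_csSup hbdd ⟨t, ht, rfl⟩

/-- The key pointwise estimate for a single function `rr`. -/
lemma key_estimate {T : ℝ} (hT : 0 ≤ T) {C : ℝ} (hC : 0 ≤ C)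
    {f : ℝ → ℝ} (hfint : IntervalIntegrable f volume 0 T)
    {rr rr' : ℝ → ℝ}
    (hAC : ∀ t ∈ Set.Icc (0:ℝ) T, rr t = rr 0 + ∫ s in (0:ℝ)..t, rr' s)
    (hr'L2 : IntervalIntegrable (fun s => (rr' s) ^ 2) volume 0 T)
    (hb : (rr 0) ^ 2 + ∫ s in (0:ℝ)..T, (rr' s) ^ 2 ≤ C ^ 2)
    (hpr : IntervalIntegrable (fun t => rr t * f t) volume 0 T)
    {τ : ℝ} (hτ : τ ∈ Set.Icc (0:ℝ) T) :
    |∫ t in (0:ℝ)..τ, rr t * f t| ≤ C * (1 + 2 * Real.sqrt τ) * relaxNorm T f := by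
  obtain ⟨hτ0, hτT⟩ := hτ
  set K := relaxNorm T f with hK
  have hK0 : 0 ≤ K := relaxNorm_nonneg T f
  have hΦ : ∀ t ∈ Set.Icc (0:ℝ) T, |∫ x in (0:ℝ)..t, f x| ≤ K :=
    fun t ht => abs_primitive_le hT hfint ht
  have hIT0 : 0 ≤ ∫ s in (0:ℝ)..T, (rr' s) ^ 2 :=
    intervalIntegral.integral_nonneg hT (fun x _ => sq_nonneg _)
  have hr0 : |rr 0| ≤ C := by
    calc |rr 0| = Real.sqrt ((rr 0) ^ 2) := (Real.sqrt_sq_eq_abs _).symm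
      _ ≤ Real.sqrt (C ^ 2) := Real.sqrt_le_sqrt (by linarith)
      _ = C := Real.sqrt_sq hC
  -- subset facts
  have hsub : Set.uIcc (0:ℝ) τ ⊆ Set.uIcc (0:ℝ) T := by
    rw [Set.uIcc_of_le hτ0, Set.uIcc_of_le hT]
    exact Set.Icc_subset_Icc le_rfl hτT
  set A : Set ℝ := {t | t ∈ Set.Icc (0:ℝ) τ ∧ IntervalIntegrable rr' volume 0 t} with hA
  have h0A : (0:ℝ) ∈ A := ⟨⟨le_rfl, hτ0⟩, IntervalIntegrable.refl⟩
  have hAne : A.Nonempty := ⟨0, h0A⟩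
  have hbddA : BddAbove A := ⟨τ, fun t ht => ht.1.2⟩
  set t₀ := sSup A with ht₀
  have ht₀0 : 0 ≤ t₀ := le_csSup hbddA h0A
  have ht₀τ : t₀ ≤ τ := csSup_le hAne (fun t ht => ht.1.2)
  have hlt : ∀ t, 0 ≤ t → t < t₀ → t ∈ A := by
    intro t ht0 htlt
    obtain ⟨b, hbA, htb⟩ := exists_lt_of_lt_csSup hAne htlt
    exact ⟨⟨ht0, le_trans htb.le hbA.1.2⟩,
      hbA.2.mono_set (Set.uIcc_subset_uIcc Set.left_mem_uIcc
        (by rw [Set.uIcc_of_le (le_trans ht0 htb.le)]; exact ⟨ht0, htb.le⟩))⟩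
  set g : ℝ → ℝ := fun t => ∫ s in (0:ℝ)..t, rr' s with hg
  have hgz : ∀ t ∈ Set.Ioc t₀ τ, g t = 0 := by
    intro t ht
    have htA : t ∉ A := fun hmem => absurd (le_csSup hbddA hmem) (not_le.mpr ht.1)
    have : ¬ IntervalIntegrable rr' volume 0 t := by
      intro hc; exact htA ⟨⟨le_trans ht₀0 ht.1.le, ht.2⟩, hc⟩
    exact intervalIntegral.integral_undef this
  -- integrability of g * f on [0, τ]
  have hgf_int : IntervalIntegrable (fun t => g t * f t) volume 0 τ := by
    have h1 : IntervalIntegrable (fun t => rr t * f t - rr 0 * f t) volume 0 τ :=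
      (hpr.mono_set hsub).sub (((hfint.const_mul (rr 0)).mono_set hsub))
    refine h1.congr ?_
    intro x hx
    rw [Set.uIoc_of_le hτ0] at hx
    have hxI : x ∈ Set.Icc (0:ℝ) T := ⟨hx.1.le, le_trans hx.2 hτT⟩
    have := hAC x hxI
    simp only [hg]; rw [this]; ring
  -- bound on A
  have hbA : ∀ t ∈ A, |∫ x in (0:ℝ)..t, g x * f x| ≤ 2 * C * Real.sqrt τ * K := by
    rintro t ⟨⟨ht0, htτ⟩, hti⟩
    have htT : t ≤ T := le_trans htτ hτT
    have hsubt : Set.uIcc (0:ℝ) t ⊆ Set.uIcc (0:ℝ) T := by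
      rw [Set.uIcc_of_le ht0, Set.uIcc_of_le hT]
      exact Set.Icc_subset_Icc le_rfl htT
    have hft : IntervalIntegrable f volume 0 t := hfint.mono_set hsubt
    have hident := ibp_aux ht0 hti hft
    have hΦcont : ContinuousOn (fun s => (∫ x in (0:ℝ)..t, f x) - ∫ x in (0:ℝ)..s, f x)
        (Set.uIcc 0 t) := by
      refine continuousOn_const.sub ?_
      exact intervalIntegral.continuousOn_primitive_interval
        ((integrableOn_Icc_iff_integrableOn_Ioc).mpr
          ((intervalIntegrable_iff_integrableOn_Ioc_of_le ht0).mp hft) |>.mono_set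
          (by rw [Set.uIcc_of_le ht0]))
    have hint1 : IntervalIntegrable
        (fun s => |rr' s * ((∫ x in (0:ℝ)..t, f x) - ∫ x in (0:ℝ)..s, f x)|) volume 0 t :=
      (hti.mul_continuousOn hΦcont).abs
    have hint2 : IntervalIntegrable (fun s => |rr' s| * (2 * K)) volume 0 t :=
      (hti.abs).mul_const _
    have hptw : ∀ s ∈ Set.Icc (0:ℝ) t,
        |rr' s * ((∫ x in (0:ℝ)..t, f x) - ∫ x in (0:ℝ)..s, f x)| ≤ |rr' s| * (2 * K) := by
      intro s hs
      rw [abs_mul]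
      refine mul_le_mul_of_nonneg_left ?_ (abs_nonneg _)
      calc |(∫ x in (0:ℝ)..t, f x) - ∫ x in (0:ℝ)..s, f x|
          ≤ |∫ x in (0:ℝ)..t, f x| + |∫ x in (0:ℝ)..s, f x| := abs_sub _ _
        _ ≤ K + K := add_le_add (hΦ t ⟨ht0, htT⟩) (hΦ s ⟨hs.1, le_trans hs.2 htT⟩)
        _ = 2 * K := by ring
    have hCS : ∫ s in (0:ℝ)..t, |rr' s| ≤ Real.sqrt τ * C := by
      have h1 := cs_aux ht0 hti (hr'L2.mono_set hsubt)
      have hIt : ∫ s in (0:ℝ)..t, (rr' s) ^ 2 ≤ ∫ s in (0:ℝ)..T, (rr' s) ^ 2 :=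
        intervalIntegral.integral_mono_interval le_rfl ht0 htT
          (Eventually.of_forall fun x => sq_nonneg _) hr'L2
      have hIC : ∫ s in (0:ℝ)..t, (rr' s) ^ 2 ≤ C ^ 2 := by nlinarith [sq_nonneg (rr 0)]
      calc ∫ s in (0:ℝ)..t, |rr' s| ≤ Real.sqrt (t * ∫ s in (0:ℝ)..t, (rr' s) ^ 2) := h1
        _ ≤ Real.sqrt (τ * C ^ 2) := by
            refine Real.sqrt_le_sqrt ?_
            refine mul_le_mul htτ hIC
              (intervalIntegral.integral_nonneg ht0 fun x _ => sq_nonneg _) hτ0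
        _ = Real.sqrt τ * C := by
            rw [Real.sqrt_mul hτ0, Real.sqrt_sq hC]
    calc |∫ x in (0:ℝ)..t, g x * f x|
        = |∫ s in (0:ℝ)..t, rr' s * ((∫ x in (0:ℝ)..t, f x) - ∫ x in (0:ℝ)..s, f x)| := by
          rw [← hident]
      _ ≤ ∫ s in (0:ℝ)..t,
          |rr' s * ((∫ x in (0:ℝ)..t, f x) - ∫ x in (0:ℝ)..s, f x)| :=
          intervalIntegral.abs_integral_le_integral_abs ht0
      _ ≤ ∫ s in (0:ℝ)..t, |rr' s| * (2 * K) :=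
          intervalIntegral.integral_mono_on ht0 hint1 hint2 hptw
      _ = (∫ s in (0:ℝ)..t, |rr' s|) * (2 * K) := intervalIntegral.integral_mul_const _ _
      _ ≤ (Real.sqrt τ * C) * (2 * K) :=
          mul_le_mul_of_nonneg_right hCS (by positivity)
      _ = 2 * C * Real.sqrt τ * K := by ring
  -- bound at t₀
  have ht₀b : |∫ x in (0:ℝ)..t₀, g x * f x| ≤ 2 * C * Real.sqrt τ * K := by
    by_cases h : t₀ ∈ A
    · exact hbA _ h
    · have ht₀pos : 0 < t₀ := by
        rcases eq_or_lt_of_le ht₀0 with he | hlt'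
        · exact absurd (he ▸ h0A) h
        · exact hlt'
      have hGcont : ContinuousOn (fun x => ∫ t in (0:ℝ)..x, g t * f t) (Set.Icc 0 τ) := by
        have := intervalIntegral.continuousOn_primitive_interval
          (f := fun t => g t * f t) (μ := volume) (a := 0) (b := τ) ?_
        · rwa [Set.uIcc_of_le hτ0] at this
        · rw [Set.uIcc_of_le hτ0]
          exact (integrableOn_Icc_iff_integrableOn_Ioc).mpr
            ((intervalIntegrable_iff_integrableOn_Ioc_of_le hτ0).mp hgf_int)
      have hmem : t₀ ∈ Set.Icc (0:ℝ) τ := ⟨ht₀0, ht₀τ⟩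
      have hTend : Tendsto (fun x => |∫ t in (0:ℝ)..x, g t * f t|)
          (nhdsWithin t₀ (Set.Ioo 0 t₀)) (nhds (|∫ t in (0:ℝ)..t₀, g t * f t|)) := by
        refine Tendsto.abs ?_
        exact ((hGcont t₀ hmem).mono
          (fun x hx => ⟨hx.1.le, le_trans hx.2.le ht₀τ⟩))
      haveI := right_nhdsWithin_Ioo_neBot ht₀pos
      refine le_of_tendsto hTend ?_
      refine eventually_of_mem self_mem_nhdsWithin (fun t ht => ?_)
      exact hbA t (hlt t ht.1.le ht.2)
  -- the tail integral vanishes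
  have htail : ∫ x in t₀..τ, g x * f x = 0 := by
    rw [intervalIntegral.integral_of_le ht₀τ]
    rw [setIntegral_congr_fun measurableSet_Ioc
      (fun x hx => by simp only []; rw [hgz x hx, zero_mul]; rfl : Set.EqOn (fun x => g x * f x) 0 (Set.Ioc t₀ τ))]
    simp
  have hsplit : ∫ x in (0:ℝ)..τ, g x * f x = ∫ x in (0:ℝ)..t₀, g x * f x := by
    have h1 := intervalIntegral.integral_add_adjacent_intervals
      (hgf_int.mono_set (Set.uIcc_subset_uIcc Set.left_mem_uIcc
        (by rw [Set.uIcc_of_le hτ0]; exact ⟨ht₀0, ht₀τ⟩)))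
      (hgf_int.mono_set (Set.uIcc_subset_uIcc
        (by rw [Set.uIcc_of_le hτ0]; exact ⟨ht₀0, ht₀τ⟩) Set.right_mem_uIcc))
    rw [← h1, htail, add_zero]
  -- decompose the main integral
  have hdecomp : ∫ t in (0:ℝ)..τ, rr t * f t
      = rr 0 * (∫ x in (0:ℝ)..τ, f x) + ∫ x in (0:ℝ)..t₀, g x * f x := by
    have h1 : ∫ t in (0:ℝ)..τ, rr t * f t
        = ∫ t in (0:ℝ)..τ, (rr 0 * f t + g t * f t) := by
      refine intervalIntegral.integral_congr (fun x hx => ?_)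
      rw [Set.uIcc_of_le hτ0] at hx
      have hxI : x ∈ Set.Icc (0:ℝ) T := ⟨hx.1, le_trans hx.2 hτT⟩
      have := hAC x hxI
      simp only [hg]; rw [this]; ring
    rw [h1, intervalIntegral.integral_add ((hfint.mono_set hsub).const_mul (rr 0)) hgf_int,
      intervalIntegral.integral_const_mul, hsplit]
  rw [hdecomp]
  have hΦτ : |∫ x in (0:ℝ)..τ, f x| ≤ K := hΦ τ ⟨hτ0, hτT⟩
  calc |rr 0 * (∫ x in (0:ℝ)..τ, f x) + ∫ x in (0:ℝ)..t₀, g x * f x|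
      ≤ |rr 0 * (∫ x in (0:ℝ)..τ, f x)| + |∫ x in (0:ℝ)..t₀, g x * f x| := abs_add_le _ _
    _ ≤ C * K + 2 * C * Real.sqrt τ * K := by
        refine add_le_add ?_ ht₀b
        rw [abs_mul]
        exact mul_le_mul hr0 hΦτ (abs_nonneg _) hC
    _ = C * (1 + 2 * Real.sqrt τ) * K := by ring

theorem relax_product_estimate_and_convergence
    {B : Type*} (T : ℝ) (hT : 0 < T) (C : ℝ) (hC : 0 ≤ C)
    (φ : ℕ → ℝ → ℝ) (hφint : ∀ n, IntervalIntegrable (φ n) volume 0 T)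
    (hφ : Tendsto (fun n => relaxNorm T (φ n)) atTop (nhds 0))
    (r r' : B → ℝ → ℝ)
    (hAC : ∀ β, ∀ t ∈ Set.Icc (0:ℝ) T, r β t = r β 0 + ∫ s in (0:ℝ)..t, r' β s)
    (hr'L2 : ∀ β, IntervalIntegrable (fun s => (r' β s) ^ 2) volume 0 T)
    (hbound : ∀ β, (r β 0) ^ 2 + ∫ s in (0:ℝ)..T, (r' β s) ^ 2 ≤ C ^ 2)
    (hprod : ∀ β n, IntervalIntegrable (fun t => r β t * φ n t) volume 0 T) :
    (∀ β n, ∀ τ ∈ Set.Icc (0:ℝ) T,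
      |∫ t in (0:ℝ)..τ, r β t * φ n t| ≤
        C * (1 + 2 * Real.sqrt τ) * relaxNorm T (φ n)) ∧
    (∀ ε > 0, ∃ N : ℕ, ∀ n ≥ N, ∀ β,
      relaxNorm T (fun t => r β t * φ n t) ≤ ε) := by
  have hpart1 : ∀ β n, ∀ τ ∈ Set.Icc (0:ℝ) T,
      |∫ t in (0:ℝ)..τ, r β t * φ n t| ≤
        C * (1 + 2 * Real.sqrt T) * relaxNorm T (φ n) ∧
      |∫ t in (0:ℝ)..τ, r β t * φ n t| ≤
        C * (1 + 2 * Real.sqrt τ) * relaxNorm T (φ n) := by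
    intro β n τ hτ
    have h := key_estimate hT.le hC (hφint n) (hAC β) (hr'L2 β) (hbound β) (hprod β n) hτ
    refine ⟨le_trans h ?_, h⟩
    have hK0 : 0 ≤ relaxNorm T (φ n) := relaxNorm_nonneg _ _
    have : Real.sqrt τ ≤ Real.sqrt T := Real.sqrt_le_sqrt hτ.2
    have h1 : C * (1 + 2 * Real.sqrt τ) ≤ C * (1 + 2 * Real.sqrt T) := by
      refine mul_le_mul_of_nonneg_left (by linarith) hC
    exact mul_le_mul_of_nonneg_right h1 hK0
  constructor
  · intro β n τ hτ; exact (hpart1 β n τ hτ).2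
  · intro ε hε
    set D := C * (1 + 2 * Real.sqrt T) with hD
    have hD0 : 0 ≤ D := by positivity
    set δ := ε / (D + 1) with hδ
    have hδ0 : 0 < δ := div_pos hε (by linarith)
    obtain ⟨N, hN⟩ := (Metric.tendsto_atTop.mp hφ) δ hδ0
    refine ⟨N, fun n hn β => ?_⟩
    have hKn : relaxNorm T (φ n) ≤ δ := by
      have := hN n hn
      rw [Real.dist_eq, sub_zero] at this
      calc relaxNorm T (φ n) ≤ |relaxNorm T (φ n)| := le_abs_self _
        _ ≤ δ := this.le
    refine relaxNorm_le hε.le (fun t ht => ?_)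
    calc |∫ τ in (0:ℝ)..t, r β τ * φ n τ| ≤ D * relaxNorm T (φ n) := (hpart1 β n t ht).1
      _ ≤ D * δ := mul_le_mul_of_nonneg_left hKn hD0
      _ ≤ (D + 1) * δ := by nlinarith
      _ = ε := by rw [hδ]; field_simp
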